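/- arXiv:2501.15569 — 6 statements merged into one kernel-verified Lean document; each statement's English description precedes it below -/
import Mathlib

section
/- Let A be a graded ring and F a t-filter on A. If I and J are homogeneous two-sided ideals of A that belong to F (regarded as homogeneous right ideals), then the product ideal I·J (the additive span of the products x·y with x ∈ I and y ∈ J) also belongs to F. (Proposition 2.3(1).) -/
set_option maxHeartbeats 1000000


/-!
Proposition 2.3(1): if a t-filter `F` on a graded ring `A` contains two homogeneous
two-sided ideals `I` and `J` (regarded as right ideals), then it contains their
product `I·J`.
-/

/-- `I ⊆ A` is a right ideal (as a set): an additive subgroup closed under right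
multiplication by arbitrary elements. -/
def IsRightIdealSet {A : Type*} [Ring A] (I : Set A) : Prop :=
  (0 : A) ∈ I ∧ (∀ x ∈ I, ∀ y ∈ I, x + y ∈ I) ∧ (∀ x ∈ I, -x ∈ I) ∧
    ∀ x ∈ I, ∀ a : A, x * a ∈ I

/-- `I ⊆ A` is a two-sided ideal (as a set). -/
def IsTwoSidedIdealSet {A : Type*} [Ring A] (I : Set A) : Prop :=
  IsRightIdealSet I ∧ ∀ x ∈ I, ∀ a : A, a * x ∈ I

/-- A subset of a graded ring is homogeneous if it contains all homogeneous
components of each of its elements. -/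
def SetIsHomogeneous {A : Type*} [Ring A] (𝒜 : ℕ → AddSubgroup A) [GradedRing 𝒜]
    (I : Set A) : Prop :=
  ∀ x ∈ I, ∀ n : ℕ, ((DirectSum.decompose 𝒜 x n : 𝒜 n) : A) ∈ I

/-- `a` is a homogeneous element of the graded ring `A`. -/
def IsHomogeneousElem {A : Type*} [Ring A] (𝒜 : ℕ → AddSubgroup A) [GradedRing 𝒜]
    (a : A) : Prop :=
  ∃ n : ℕ, a ∈ 𝒜 n

/-- A t-filter on a graded ring `A`: a collection of homogeneous right ideals
satisfying T1, T2, T3. -/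
structure IsTFilter {A : Type*} [Ring A] (𝒜 : ℕ → AddSubgroup A) [GradedRing 𝒜]
    (F : Set (Set A)) : Prop where
  mem_ideal : ∀ I ∈ F, IsRightIdealSet I ∧ SetIsHomogeneous 𝒜 I
  univ_mem : (Set.univ : Set A) ∈ F
  colon_mem : ∀ I ∈ F, ∀ a : A, IsHomogeneousElem 𝒜 a → {x : A | a * x ∈ I} ∈ F
  saturated : ∀ I ∈ F, ∀ J : Set A, IsRightIdealSet J → SetIsHomogeneous 𝒜 J →
    (∀ a ∈ I, IsHomogeneousElem 𝒜 a → {x : A | a * x ∈ J} ∈ F) → J ∈ F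

/-- The product `I·J` of two subsets of `A`: the additive span of the products
`x * y` with `x ∈ I`, `y ∈ J`. -/
def setIdealMul {A : Type*} [Ring A] (I J : Set A) : Set A :=
  (AddSubgroup.closure {z : A | ∃ x ∈ I, ∃ y ∈ J, z = x * y} : AddSubgroup A)

/-- Proposition 2.3(1). -/
theorem tFilter_mem_setIdealMul {A : Type*} [Ring A] (𝒜 : ℕ → AddSubgroup A)
    [GradedRing 𝒜] (F : Set (Set A)) (hF : IsTFilter 𝒜 F) (I J : Set A)
    (hI : IsTwoSidedIdealSet I) (hIhom : SetIsHomogeneous 𝒜 I)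
    (hJ : IsTwoSidedIdealSet J) (hJhom : SetIsHomogeneous 𝒜 J)
    (hIF : I ∈ F) (hJF : J ∈ F) :
    setIdealMul I J ∈ F := by
  classical
  set S : Set A := {z : A | ∃ x ∈ I, ∃ y ∈ J, z = x * y} with hS
  set P : AddSubgroup A := AddSubgroup.closure S with hP
  have hPmul : ∀ z ∈ P, ∀ a : A, z * a ∈ P := by
    intro z hz a
    induction hz using AddSubgroup.closure_induction with
    | mem x hx =>
      obtain ⟨u, hu, v, hv, rfl⟩ := hx
      exact AddSubgroup.subset_closure ⟨u, hu, v * a, hJ.1.2.2.2 v hv a, mul_assoc u v a⟩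
    | zero => simpa using P.zero_mem
    | add x y hx hy ihx ihy => simpa [add_mul] using P.add_mem ihx ihy
    | neg x hx ihx => simpa [neg_mul] using P.neg_mem ihx
  have hPhom : ∀ z ∈ P, ∀ n : ℕ, ((DirectSum.decompose 𝒜 z n : 𝒜 n) : A) ∈ P := by
    intro z hz
    induction hz using AddSubgroup.closure_induction with
    | mem x hx =>
      obtain ⟨u, hu, v, hv, rfl⟩ := hx
      intro n
      rw [DirectSum.decompose_mul, DirectSum.coe_mul_apply]
      refine P.sum_mem fun ij _ => AddSubgroup.subset_closure ?_
      exact ⟨(DirectSum.decompose 𝒜 u ij.1 : A), hIhom u hu ij.1,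
        (DirectSum.decompose 𝒜 v ij.2 : A), hJhom v hv ij.2, rfl⟩
    | zero => intro n; simpa using P.zero_mem
    | add x y hx hy ihx ihy =>
      intro n
      rw [DirectSum.decompose_add]
      simpa using P.add_mem (ihx n) (ihy n)
    | neg x hx ihx =>
      intro n
      rw [DirectSum.decompose_neg, DFinsupp.neg_apply]
      simpa using P.neg_mem (ihx n)
  -- upward closedness of F
  have hup : ∀ K ∈ F, ∀ L : Set A, IsRightIdealSet L → SetIsHomogeneous 𝒜 L →
      K ⊆ L → L ∈ F := by
    intro K hKF L hL hLhom hKL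
    refine hF.saturated K hKF L hL hLhom fun a ha _ => ?_
    have : {x : A | a * x ∈ L} = Set.univ :=
      Set.eq_univ_iff_forall.2 fun x => hL.2.2.2 a (hKL ha) x
    rw [this]; exact hF.univ_mem
  refine hF.saturated I hIF (setIdealMul I J) ?_ ?_ ?_
  · exact ⟨P.zero_mem, fun x hx y hy => P.add_mem hx hy, fun x hx => P.neg_mem hx, hPmul⟩
  · exact hPhom
  · rintro a haI ⟨m, ham⟩
    refine hup J hJF {x : A | a * x ∈ setIdealMul I J} ?_ ?_
      (fun y hy => AddSubgroup.subset_closure ⟨a, haI, y, hy, rfl⟩)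
    · refine ⟨by show a * 0 ∈ P; simpa using P.zero_mem, fun x hx y hy => ?_, fun x hx => ?_, fun x hx b => ?_⟩
      · show a * (x + y) ∈ P
        simpa [mul_add] using P.add_mem hx hy
      · show a * -x ∈ P
        rw [mul_neg]; exact P.neg_mem hx
      · show a * (x * b) ∈ P
        simpa [← mul_assoc] using hPmul _ hx b
    · intro x hx n
      show a * (DirectSum.decompose 𝒜 x n : A) ∈ P
      rw [← DirectSum.coe_decompose_mul_add_of_left_mem 𝒜 ham]
      exact hPhom _ hx (m + n)
end

section
/- Let A be a graded ring and B a set of homogeneous two-sided ideals of A, each of which is finitely generated as a right ideal. Let F be the set of all homogeneous right ideals of A that contain a finite product I_1·I_2·⋯·I_k of ideals from B (the empty product being A itself). Then F is a t-filter, and F is of finite type: every member of F contains a finitely generated homogeneous right ideal that again belongs to F. (Proposition 2.3(2).) -/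
/-- The product of a finite list of ideals; the empty product is `A` itself. -/
def listIdealProd {A : Type*} [Ring A] : List (Set A) → Set A
  | [] => Set.univ
  | I :: l => setIdealMul I (listIdealProd l)

/-- The right ideal of `A` generated by a set `s`. -/
def rightIdealSpan {A : Type*} [Ring A] (s : Set A) : Set A :=
  (AddSubgroup.closure {y : A | ∃ a ∈ s, ∃ r : A, y = a * r} : AddSubgroup A)

/-- `I` is finitely generated as a right ideal. -/
def IsFGRightIdealSet {A : Type*} [Ring A] (I : Set A) : Prop :=
  ∃ s : Finset A, I = rightIdealSpan (s : Set A)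

set_option maxHeartbeats 1000000
set_option synthInstance.maxHeartbeats 1000000

namespace TFAux

variable {A : Type*} [Ring A]

/-- The additive subgroup underlying a right ideal. -/
def riGroup {I : Set A} (h : IsRightIdealSet I) : AddSubgroup A where
  carrier := I
  zero_mem' := h.1
  add_mem' := fun ha hb => h.2.1 _ ha _ hb
  neg_mem' := fun ha => h.2.2.1 _ ha

lemma mem_setIdealMul {I P : Set A} {x y : A} (hx : x ∈ I) (hy : y ∈ P) :
    x * y ∈ setIdealMul I P :=
  AddSubgroup.subset_closure ⟨x, hx, y, hy, rfl⟩

lemma setIdealMul_le {I P : Set A} {H : AddSubgroup A}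
    (h : ∀ x ∈ I, ∀ y ∈ P, x * y ∈ H) : setIdealMul I P ⊆ H := fun z hz =>
  (AddSubgroup.closure_le H).2
    (fun w hw => by obtain ⟨x, hx, y, hy, rfl⟩ := hw; exact h x hx y hy) hz

lemma setIdealMul_subset {I P J : Set A} (hJ : IsRightIdealSet J)
    (h : ∀ x ∈ I, ∀ y ∈ P, x * y ∈ J) : setIdealMul I P ⊆ J :=
  setIdealMul_le (H := riGroup hJ) h

lemma setIdealMul_mono_right {I P P' : Set A} (h : P ⊆ P') :
    setIdealMul I P ⊆ setIdealMul I P' :=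
  AddSubgroup.closure_mono (fun z => by
    rintro ⟨x, hx, y, hy, rfl⟩; exact ⟨x, hx, y, h hy, rfl⟩)

lemma isRightIdeal_setIdealMul {I P : Set A} (hP : IsRightIdealSet P) :
    IsRightIdealSet (setIdealMul I P) := by
  refine ⟨AddSubgroup.zero_mem _, fun x hx y hy => AddSubgroup.add_mem _ hx hy,
    fun x hx => AddSubgroup.neg_mem _ hx, fun x hx a => ?_⟩
  induction hx using AddSubgroup.closure_induction with
  | mem z hz =>
      obtain ⟨u, hu, v, hv, rfl⟩ := hz
      rw [mul_assoc]
      exact mem_setIdealMul hu (hP.2.2.2 v hv a)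
  | zero => rw [zero_mul]; exact AddSubgroup.zero_mem _
  | add x y _ _ hx hy => rw [add_mul]; exact AddSubgroup.add_mem _ hx hy
  | neg x _ hx => rw [neg_mul]; exact AddSubgroup.neg_mem _ hx

lemma subset_rightIdealSpan {s : Set A} : s ⊆ rightIdealSpan s := fun a ha =>
  AddSubgroup.subset_closure ⟨a, ha, 1, (mul_one a).symm⟩

lemma rightIdealSpan_subset {s J : Set A} (hJ : IsRightIdealSet J) (h : s ⊆ J) :
    rightIdealSpan s ⊆ J := fun z hz =>
  (AddSubgroup.closure_le (riGroup hJ)).2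
    (fun w hw => by obtain ⟨a, ha, r, rfl⟩ := hw; exact hJ.2.2.2 a (h ha) r) hz

lemma isRightIdeal_rightIdealSpan {s : Set A} : IsRightIdealSet (rightIdealSpan s) := by
  refine ⟨AddSubgroup.zero_mem _, fun x hx y hy => AddSubgroup.add_mem _ hx hy,
    fun x hx => AddSubgroup.neg_mem _ hx, fun x hx a => ?_⟩
  induction hx using AddSubgroup.closure_induction with
  | mem z hz =>
      obtain ⟨b, hb, r, rfl⟩ := hz
      rw [mul_assoc]
      exact AddSubgroup.subset_closure ⟨b, hb, r * a, rfl⟩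
  | zero => rw [zero_mul]; exact AddSubgroup.zero_mem _
  | add x y _ _ hx hy => rw [add_mul]; exact AddSubgroup.add_mem _ hx hy
  | neg x _ hx => rw [neg_mul]; exact AddSubgroup.neg_mem _ hx

lemma isRightIdeal_univ : IsRightIdealSet (Set.univ : Set A) :=
  ⟨trivial, fun _ _ _ _ => trivial, fun _ _ => trivial, fun _ _ _ => trivial⟩

lemma isRightIdeal_listIdealProd : ∀ l : List (Set A), IsRightIdealSet (listIdealProd l)
  | [] => isRightIdeal_univ
  | _ :: l => isRightIdeal_setIdealMul (isRightIdeal_listIdealProd l)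

/-- Left-multiplication closure of a product of left-closed ideals. -/
lemma listIdealProd_left_mul {l : List (Set A)}
    (hl : ∀ I ∈ l, ∀ x ∈ I, ∀ a : A, a * x ∈ I) :
    ∀ a : A, ∀ x ∈ listIdealProd l, a * x ∈ listIdealProd l := by
  induction l with
  | nil => intro a x _; trivial
  | cons I l _ =>
      intro a x hx
      induction hx using AddSubgroup.closure_induction with
      | mem z hz =>
          obtain ⟨u, hu, v, hv, rfl⟩ := hz
          rw [← mul_assoc]
          exact mem_setIdealMul (hl I (List.mem_cons_self) u hu a) hv
      | zero => rw [mul_zero]; exact AddSubgroup.zero_mem _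
      | add x y _ _ hx hy => rw [mul_add]; exact AddSubgroup.add_mem _ hx hy
      | neg x _ hx => rw [mul_neg]; exact AddSubgroup.neg_mem _ hx

lemma listIdealProd_append_subset_left (l1 l2 : List (Set A)) :
    listIdealProd (l1 ++ l2) ⊆ listIdealProd l1 := by
  induction l1 with
  | nil => exact fun x _ => trivial
  | cons I l1 ih => exact setIdealMul_mono_right ih

lemma listIdealProd_append_subset_right {l1 l2 : List (Set A)}
    (hl2 : ∀ I ∈ l2, ∀ x ∈ I, ∀ a : A, a * x ∈ I) :
    listIdealProd (l1 ++ l2) ⊆ listIdealProd l2 := by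
  induction l1 with
  | nil => exact fun x hx => hx
  | cons I l1 ih =>
      exact setIdealMul_subset (isRightIdeal_listIdealProd l2)
        (fun x _ y hy => listIdealProd_left_mul hl2 x y (ih hy))

lemma setIdealMul_assoc_subset {I P Q : Set A} :
    setIdealMul I (setIdealMul P Q) ⊆ setIdealMul (setIdealMul I P) Q := by
  refine setIdealMul_le (fun x hx y hy => ?_)
  induction hy using AddSubgroup.closure_induction with
  | mem z hz =>
      obtain ⟨p, hp, q, hq, rfl⟩ := hz
      rw [← mul_assoc]
      exact mem_setIdealMul (mem_setIdealMul hx hp) hq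
  | zero => simpa using AddSubgroup.zero_mem _
  | add y1 y2 _ _ h1 h2 => rw [mul_add]; exact AddSubgroup.add_mem _ h1 h2
  | neg y _ h => rw [mul_neg]; exact AddSubgroup.neg_mem _ h

lemma listIdealProd_append_subset (l1 l2 : List (Set A)) :
    listIdealProd (l1 ++ l2) ⊆ setIdealMul (listIdealProd l1) (listIdealProd l2) := by
  induction l1 with
  | nil =>
      intro x hx
      have : (1 : A) * x ∈ setIdealMul (listIdealProd ([] : List (Set A))) (listIdealProd l2) :=
        mem_setIdealMul trivial hx
      simpa using this
  | cons I l1 ih =>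
      exact Set.Subset.trans (setIdealMul_mono_right ih) setIdealMul_assoc_subset

variable (𝒜 : ℕ → AddSubgroup A) [GradedRing 𝒜]

/-- A right ideal generated by homogeneous elements is homogeneous. -/
lemma rightIdealSpan_homog {s : Set A} (hs : ∀ a ∈ s, IsHomogeneousElem 𝒜 a) :
    SetIsHomogeneous 𝒜 (rightIdealSpan s) := by
  intro x hx n
  induction hx using AddSubgroup.closure_induction generalizing n with
  | mem z hz =>
      obtain ⟨a, ha, r, rfl⟩ := hz
      obtain ⟨m, hm⟩ := hs a ha
      by_cases h : m ≤ n
      · rw [DirectSum.coe_decompose_mul_of_left_mem_of_le 𝒜 hm h]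
        exact AddSubgroup.subset_closure ⟨a, ha, _, rfl⟩
      · rw [DirectSum.coe_decompose_mul_of_left_mem_of_not_le 𝒜 hm h]
        exact AddSubgroup.zero_mem _
  | zero =>
      simp only [DirectSum.decompose_zero, DirectSum.zero_apply, ZeroMemClass.coe_zero]
      exact AddSubgroup.zero_mem _
  | add x y _ _ hx hy =>
      rw [DirectSum.decompose_add, DirectSum.add_apply, AddSubgroup.coe_add]
      exact AddSubgroup.add_mem _ (hx n) (hy n)
  | neg x _ hx =>
      rw [DirectSum.decompose_neg, DFinsupp.neg_apply, AddSubgroup.coe_neg]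
      exact AddSubgroup.neg_mem _ (hx n)

/-- A homogeneous f.g. right ideal has a finite homogeneous generating set. -/
lemma exists_homog_gens {I : Set A} (hhom : SetIsHomogeneous 𝒜 I)
    (hfg : IsFGRightIdealSet I) :
    ∃ s : Finset A, (∀ a ∈ s, IsHomogeneousElem 𝒜 a ∧ a ∈ I) ∧
      I = rightIdealSpan (s : Set A) := by
  classical
  obtain ⟨s₀, rfl⟩ := hfg
  refine ⟨s₀.biUnion (fun a => (DirectSum.decompose 𝒜 a).support.image
    (fun n => ((DirectSum.decompose 𝒜 a n : 𝒜 n) : A))), ?_, ?_⟩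
  · intro b hb
    simp only [Finset.mem_biUnion, Finset.mem_image] at hb
    obtain ⟨a, ha, n, _, rfl⟩ := hb
    exact ⟨⟨n, (DirectSum.decompose 𝒜 a n).2⟩,
      hhom a (subset_rightIdealSpan ha) n⟩
  · apply Set.Subset.antisymm
    · refine rightIdealSpan_subset isRightIdeal_rightIdealSpan (fun a ha => ?_)
      have : a = ∑ n ∈ (DirectSum.decompose 𝒜 a).support,
          ((DirectSum.decompose 𝒜 a n : 𝒜 n) : A) :=
        (DirectSum.sum_support_decompose 𝒜 a).symm
      rw [this]
      refine AddSubgroup.sum_mem _ (fun n hn => subset_rightIdealSpan ?_)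
      simp only [Finset.coe_biUnion, Set.mem_iUnion, Finset.coe_image, Set.mem_image,
        Finset.mem_coe]
      exact ⟨a, ha, n, hn, rfl⟩
    · refine rightIdealSpan_subset isRightIdeal_rightIdealSpan (fun b hb => ?_)
      simp only [Finset.coe_biUnion, Set.mem_iUnion, Finset.coe_image, Set.mem_image,
        Finset.mem_coe] at hb
      obtain ⟨a, ha, n, _, rfl⟩ := hb
      exact hhom a (subset_rightIdealSpan ha) n

lemma mul_mem_span_of {a : A} {T S : Set A}
    (hab : ∀ b ∈ T, ∀ r : A, a * (b * r) ∈ rightIdealSpan S) :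
    ∀ w ∈ rightIdealSpan T, a * w ∈ rightIdealSpan S := by
  intro w hw
  induction hw using AddSubgroup.closure_induction with
  | mem z hz => obtain ⟨b, hb, r, rfl⟩ := hz; exact hab b hb r
  | zero => rw [mul_zero]; exact AddSubgroup.zero_mem _
  | add x y _ _ hx hy => rw [mul_add]; exact AddSubgroup.add_mem _ hx hy
  | neg x _ hx => rw [mul_neg]; exact AddSubgroup.neg_mem _ hx

/-- A finite product of ideals from `B` is a right ideal generated by a finite set
of homogeneous elements. -/
lemma prod_eq_span {B : Set (Set A)}
    (hB : ∀ I ∈ B, IsTwoSidedIdealSet I ∧ SetIsHomogeneous 𝒜 I ∧ IsFGRightIdealSet I) :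
    ∀ l : List (Set A), (∀ I ∈ l, I ∈ B) →
      ∃ S : Finset A, (∀ g ∈ S, IsHomogeneousElem 𝒜 g) ∧
        listIdealProd l = rightIdealSpan (S : Set A) := by
  classical
  intro l
  induction l with
  | nil =>
      intro _
      refine ⟨{1}, ?_, ?_⟩
      · intro g hg
        rw [Finset.mem_singleton] at hg
        subst hg
        exact ⟨0, SetLike.one_mem_graded 𝒜⟩
      · apply Set.Subset.antisymm
        · intro x _
          exact AddSubgroup.subset_closure ⟨1, by simp, x, (one_mul x).symm⟩
        · intro x _; trivial
  | cons I l ih =>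
      intro hmem
      obtain ⟨hI2, hIh, hIfg⟩ := hB I (hmem I (List.mem_cons_self))
      obtain ⟨s, hs, hseq⟩ := exists_homog_gens 𝒜 hIh hIfg
      obtain ⟨T, hT, hTeq⟩ := ih (fun J hJ => hmem J (List.mem_cons_of_mem I hJ))
      have hlleft : ∀ J ∈ l, ∀ x ∈ J, ∀ a : A, a * x ∈ J :=
        fun J hJ => (hB J (hmem J (List.mem_cons_of_mem I hJ))).1.2
      refine ⟨Finset.image (fun p => p.1 * p.2) (s ×ˢ T), ?_, ?_⟩
      · intro g hg
        simp only [Finset.mem_image, Finset.mem_product] at hg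
        obtain ⟨⟨a, b⟩, ⟨ha, hb⟩, rfl⟩ := hg
        obtain ⟨m, hm⟩ := (hs a ha).1
        obtain ⟨n, hn⟩ := hT b hb
        exact ⟨m + n, SetLike.mul_mem_graded hm hn⟩
      · show setIdealMul I (listIdealProd l) = _
        apply Set.Subset.antisymm
        · refine setIdealMul_le (H := AddSubgroup.closure _) (fun x hx y hy => ?_)
          rw [hseq] at hx
          induction hx using AddSubgroup.closure_induction with
          | mem z hz =>
              obtain ⟨a, ha, r, rfl⟩ := hz
              rw [mul_assoc]
              have hry : r * y ∈ listIdealProd l :=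
                listIdealProd_left_mul hlleft r y hy
              rw [hTeq] at hry
              refine mul_mem_span_of (fun b hb q => ?_) (r * y) hry
              rw [← mul_assoc]
              refine AddSubgroup.subset_closure ⟨a * b, ?_, q, rfl⟩
              simp only [Finset.coe_image, Set.mem_image, Finset.mem_coe,
                Finset.mem_product]
              exact ⟨(a, b), ⟨ha, hb⟩, rfl⟩
          | zero => rw [zero_mul]; exact AddSubgroup.zero_mem _
          | add x1 x2 _ _ h1 h2 => rw [add_mul]; exact AddSubgroup.add_mem _ h1 h2
          | neg x _ hxx => rw [neg_mul]; exact AddSubgroup.neg_mem _ hxx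
        · refine rightIdealSpan_subset
            (isRightIdeal_setIdealMul (isRightIdeal_listIdealProd l)) (fun g hg => ?_)
          simp only [Finset.coe_image, Set.mem_image, Finset.mem_coe,
            Finset.mem_product] at hg
          obtain ⟨⟨a, b⟩, ⟨ha, hb⟩, rfl⟩ := hg
          exact mem_setIdealMul (hseq ▸ subset_rightIdealSpan ha)
            (hTeq ▸ subset_rightIdealSpan hb)

/-- Combine colon data over a finite set of elements into a single product list. -/
lemma exists_list_prod_colon {B : Set (Set A)} {J : Set A}
    (hB2 : ∀ I ∈ B, ∀ x ∈ I, ∀ a : A, a * x ∈ I) (S : Finset A) :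
    (∀ g ∈ S, ∃ m : List (Set A), (∀ I ∈ m, I ∈ B) ∧
        ∀ q ∈ listIdealProd m, g * q ∈ J) →
      ∃ M : List (Set A), (∀ I ∈ M, I ∈ B) ∧
        ∀ g ∈ S, ∀ q ∈ listIdealProd M, g * q ∈ J := by
  classical
  induction S using Finset.induction_on with
  | empty => exact fun _ => ⟨[], by simp, by simp⟩
  | insert _ _ ha ih =>
      rename_i a S
      intro h
      obtain ⟨m, hmB, hm⟩ := h a (Finset.mem_insert_self a S)
      obtain ⟨M, hMB, hM⟩ := ih (fun g hg => h g (Finset.mem_insert_of_mem hg))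
      refine ⟨m ++ M, ?_, ?_⟩
      · intro I hI
        rcases List.mem_append.1 hI with h' | h'
        · exact hmB I h'
        · exact hMB I h'
      · intro g hg q hq
        rcases Finset.mem_insert.1 hg with rfl | hg'
        · exact hm q (listIdealProd_append_subset_left m M hq)
        · exact hM g hg' q
            (listIdealProd_append_subset_right (fun I hI => hB2 I (hMB I hI)) hq)

end TFAux

open TFAux in
/-- Proposition 2.3(2). -/
theorem tFilter_of_products {A : Type*} [Ring A] (𝒜 : ℕ → AddSubgroup A)
    [GradedRing 𝒜] (B : Set (Set A))
    (hB : ∀ I ∈ B, IsTwoSidedIdealSet I ∧ SetIsHomogeneous 𝒜 I ∧ IsFGRightIdealSet I) :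
    IsTFilter 𝒜 {J : Set A | IsRightIdealSet J ∧ SetIsHomogeneous 𝒜 J ∧
        ∃ l : List (Set A), (∀ I ∈ l, I ∈ B) ∧ listIdealProd l ⊆ J} ∧
      ∀ J ∈ {J : Set A | IsRightIdealSet J ∧ SetIsHomogeneous 𝒜 J ∧
        ∃ l : List (Set A), (∀ I ∈ l, I ∈ B) ∧ listIdealProd l ⊆ J},
        ∃ J' ∈ {J : Set A | IsRightIdealSet J ∧ SetIsHomogeneous 𝒜 J ∧
          ∃ l : List (Set A), (∀ I ∈ l, I ∈ B) ∧ listIdealProd l ⊆ J},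
          J' ⊆ J ∧ IsFGRightIdealSet J' := by
  constructor
  · constructor
    · exact fun I hI => ⟨hI.1, hI.2.1⟩
    · exact ⟨isRightIdeal_univ, fun _ _ _ => trivial, [], by simp, fun x _ => trivial⟩
    · rintro I ⟨hIri, hIhom, l, hlB, hlsub⟩ a ⟨m, hm⟩
      refine ⟨⟨?_, ?_, ?_, ?_⟩, ?_, l, hlB, ?_⟩
      · show a * 0 ∈ I; rw [mul_zero]; exact hIri.1
      · intro x hx y hy; show a * (x + y) ∈ I; rw [mul_add]
        exact hIri.2.1 _ hx _ hy
      · intro x hx; show a * (-x) ∈ I; rw [mul_neg]; exact hIri.2.2.1 _ hx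
      · intro x hx r; show a * (x * r) ∈ I; rw [← mul_assoc]
        exact hIri.2.2.2 _ hx r
      · intro x hx n
        show a * ((DirectSum.decompose 𝒜 x n : 𝒜 n) : A) ∈ I
        have := hIhom (a * x) hx (m + n)
        rwa [DirectSum.coe_decompose_mul_add_of_left_mem 𝒜 hm] at this
      · intro z hz
        show a * z ∈ I
        exact hlsub (listIdealProd_left_mul
          (fun J hJ => (hB J (hlB J hJ)).1.2) a z hz)
    · rintro I ⟨hIri, hIhom, l, hlB, hlsub⟩ J hJri hJhom hcol
      obtain ⟨S, hShom, hSeq⟩ := prod_eq_span 𝒜 hB l hlB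
      have hmem : ∀ g ∈ S, g ∈ I := fun g hg =>
        hlsub (hSeq ▸ subset_rightIdealSpan (Finset.mem_coe.2 hg))
      obtain ⟨M, hMB, hM⟩ := exists_list_prod_colon
        (fun I' hI' => (hB I' hI').1.2) S (fun g hg => by
          obtain ⟨_, _, m, hmB', hmsub⟩ := hcol g (hmem g hg) (hShom g hg)
          exact ⟨m, hmB', fun q hq => hmsub hq⟩)
      refine ⟨hJri, hJhom, l ++ M, ?_, ?_⟩
      · intro I' hI'
        rcases List.mem_append.1 hI' with h' | h'
        · exact hlB I' h'
        · exact hMB I' h'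
      · refine Set.Subset.trans (listIdealProd_append_subset l M) ?_
        refine setIdealMul_subset hJri (fun x hx q hq => ?_)
        rw [hSeq] at hx
        induction hx using AddSubgroup.closure_induction with
        | mem z hz =>
            obtain ⟨g, hg, r, rfl⟩ := hz
            rw [mul_assoc]
            exact hM g (Finset.mem_coe.1 hg) (r * q)
              (listIdealProd_left_mul (fun I' hI' => (hB I' (hMB I' hI')).1.2) r q hq)
        | zero => rw [zero_mul]; exact hJri.1
        | add x1 x2 _ _ h1 h2 => rw [add_mul]; exact hJri.2.1 _ h1 _ h2
        | neg x _ hx => rw [neg_mul]; exact hJri.2.2.1 _ hx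
  · rintro J ⟨hJri, hJhom, l, hlB, hlsub⟩
    obtain ⟨S, hShom, hSeq⟩ := prod_eq_span 𝒜 hB l hlB
    refine ⟨rightIdealSpan (S : Set A),
      ⟨isRightIdeal_rightIdealSpan,
        rightIdealSpan_homog 𝒜 (fun a ha => hShom a (Finset.mem_coe.1 ha)),
        l, hlB, le_of_eq hSeq⟩,
      ?_, S, rfl⟩
    rw [← hSeq]
    exact hlsub
end

section
/- Let A be a graded ring such that A_+ is finitely generated as a right ideal. Let G be the set of homogeneous right ideals 𝔞 of A such that (A_+)^n ⊆ 𝔞 for some n ≥ 0, where (A_+)^n denotes the n-th power of the two-sided ideal A_+. Then G is a t-filter, and for every t-filter F on A the following are equivalent: (i) A_+ ∈ F; (ii) A_{≥n} ∈ F for every n ∈ ℕ; (iii) G ⊆ F. In particular, G is simultaneously the smallest t-filter containing A_+ and the smallest t-filter containing all the ideals A_{≥n}, n ≥ 0. (Lemma 3.2 and Lemma 3.3.) -/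
/-- The `n`-th power of an ideal (as a set); the `0`-th power is `A` itself. -/
def setIdealPow {A : Type*} [Ring A] (I : Set A) : ℕ → Set A
  | 0 => Set.univ
  | n + 1 => setIdealMul I (setIdealPow I n)

/-- The tail `A_{≥ n}`: elements all of whose homogeneous components have
degree `≥ n`.  `A_+ = A_{≥ 1}`. -/
def geIdeal {A : Type*} [Ring A] (𝒜 : ℕ → AddSubgroup A) [GradedRing 𝒜]
    (n : ℕ) : Set A :=
  {x : A | ∀ m : ℕ, m < n → ((DirectSum.decompose 𝒜 x m : 𝒜 m) : A) = 0}

-- ######################## helpers start here ########################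

section Helpers

variable {A : Type*} [Ring A]

/-- package a right-ideal set as an additive subgroup -/
def IsRightIdealSet.toAddSubgroup {I : Set A} (h : IsRightIdealSet I) : AddSubgroup A where
  carrier := I
  zero_mem' := h.1
  add_mem' := fun ha hb => h.2.1 _ ha _ hb
  neg_mem' := fun ha => h.2.2.1 _ ha

lemma closure_subset_of_isRightIdealSet {s I : Set A} (h : IsRightIdealSet I) (hs : s ⊆ I) :
    (AddSubgroup.closure s : Set A) ⊆ I :=
  fun _ hx => (AddSubgroup.closure_le h.toAddSubgroup).2 hs hx

lemma isRightIdealSet_univ : IsRightIdealSet (Set.univ : Set A) :=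
  ⟨trivial, fun _ _ _ _ => trivial, fun _ _ => trivial, fun _ _ _ => trivial⟩

lemma isRightIdealSet_rightIdealSpan (s : Set A) : IsRightIdealSet (rightIdealSpan s) := by
  refine ⟨(AddSubgroup.closure _).zero_mem,
    fun x hx y hy => (AddSubgroup.closure _).add_mem hx hy,
    fun x hx => (AddSubgroup.closure _).neg_mem hx, fun x hx b => ?_⟩
  show x * b ∈ AddSubgroup.closure _
  induction hx using AddSubgroup.closure_induction with
  | mem z hz =>
    obtain ⟨a, ha, r, rfl⟩ := hz
    exact AddSubgroup.subset_closure ⟨a, ha, r * b, mul_assoc _ _ _⟩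
  | zero => simpa using (AddSubgroup.closure _).zero_mem
  | add u v _ _ hu hv => simpa [add_mul] using (AddSubgroup.closure _).add_mem hu hv
  | neg u _ hu => simpa [neg_mul] using (AddSubgroup.closure _).neg_mem hu

lemma subset_rightIdealSpan (s : Set A) : s ⊆ rightIdealSpan s :=
  fun a ha => AddSubgroup.subset_closure ⟨a, ha, 1, (mul_one a).symm⟩

lemma rightIdealSpan_subset {s I : Set A} (hs : s ⊆ I) (h : IsRightIdealSet I) :
    rightIdealSpan s ⊆ I := by
  refine closure_subset_of_isRightIdealSet h ?_
  rintro y ⟨a, ha, r, rfl⟩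
  exact h.2.2.2 a (hs ha) r

variable (𝒜 : ℕ → AddSubgroup A) [GradedRing 𝒜]

lemma mem_geIdeal_of_mem {a : A} {d n : ℕ} (ha : a ∈ 𝒜 d) (h : n ≤ d) : a ∈ geIdeal 𝒜 n :=
  fun m hm => DirectSum.decompose_of_mem_ne 𝒜 ha (by omega)

lemma geIdeal_zero : geIdeal 𝒜 0 = Set.univ :=
  Set.eq_univ_of_forall (fun _ m hm => absurd hm (Nat.not_lt_zero m))

lemma geIdeal_antitone {n n' : ℕ} (h : n ≤ n') : geIdeal 𝒜 n' ⊆ geIdeal 𝒜 n :=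
  fun _ hx m hm => hx m (lt_of_lt_of_le hm h)

lemma mul_mem_geIdeal {x y : A} {i j : ℕ} (hx : x ∈ geIdeal 𝒜 i) (hy : y ∈ geIdeal 𝒜 j) :
    x * y ∈ geIdeal 𝒜 (i + j) := by
  classical
  intro m hm
  have hxy : x * y
      = ∑ k ∈ (DirectSum.decompose 𝒜 x).support, ((DirectSum.decompose 𝒜 x k : 𝒜 k) : A) * y := by
    rw [← Finset.sum_mul, DirectSum.sum_support_decompose]
  have : ((DirectSum.decompose 𝒜 (x * y) m : 𝒜 m) : A) = GradedRing.proj 𝒜 m (x * y) := rfl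
  rw [this, hxy, map_sum]
  refine Finset.sum_eq_zero (fun k _ => ?_)
  show ((DirectSum.decompose 𝒜 (((DirectSum.decompose 𝒜 x k : 𝒜 k) : A) * y) m : 𝒜 m) : A) = 0
  by_cases hk : k ≤ m
  · rw [DirectSum.coe_decompose_mul_of_left_mem_of_le 𝒜 (SetLike.coe_mem _) hk]
    by_cases hki : k < i
    · rw [hx k hki, zero_mul]
    · rw [hy (m - k) (by omega), mul_zero]
  · rw [DirectSum.coe_decompose_mul_of_left_mem_of_not_le 𝒜 (SetLike.coe_mem _) hk]

lemma isRightIdealSet_geIdeal (n : ℕ) : IsRightIdealSet (geIdeal 𝒜 n) := by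
  refine ⟨fun m hm => by simp, fun x hx y hy m hm => ?_, fun x hx m hm => ?_, fun x hx b => ?_⟩
  · have : ((DirectSum.decompose 𝒜 (x + y) m : 𝒜 m) : A)
        = GradedRing.proj 𝒜 m x + GradedRing.proj 𝒜 m y := map_add (GradedRing.proj 𝒜 m) x y
    rw [this]
    show ((DirectSum.decompose 𝒜 x m : 𝒜 m) : A) + ((DirectSum.decompose 𝒜 y m : 𝒜 m) : A) = 0
    rw [hx m hm, hy m hm, add_zero]
  · have : ((DirectSum.decompose 𝒜 (-x) m : 𝒜 m) : A) = -(GradedRing.proj 𝒜 m x) :=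
      map_neg (GradedRing.proj 𝒜 m) x
    rw [this]
    show -((DirectSum.decompose 𝒜 x m : 𝒜 m) : A) = 0
    rw [hx m hm, neg_zero]
  · have := mul_mem_geIdeal 𝒜 hx (show b ∈ geIdeal 𝒜 0 from fun m hm => absurd hm (Nat.not_lt_zero m))
    simpa using this

lemma setIsHomogeneous_geIdeal (n : ℕ) : SetIsHomogeneous 𝒜 (geIdeal 𝒜 n) := by
  intro x hx k m hm
  by_cases hk : k = m
  · subst hk
    rw [DirectSum.decompose_of_mem_same 𝒜 (SetLike.coe_mem _)]
    exact hx k hm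
  · exact DirectSum.decompose_of_mem_ne 𝒜 (SetLike.coe_mem _) hk

lemma setIsHomogeneous_univ : SetIsHomogeneous 𝒜 (Set.univ : Set A) :=
  fun _ _ _ => trivial

lemma isRightIdealSet_colon {I : Set A} (h : IsRightIdealSet I) (a : A) :
    IsRightIdealSet {x : A | a * x ∈ I} := by
  refine ⟨?_, fun x hx y hy => ?_, fun x hx => ?_, fun x hx b => ?_⟩
  · show a * 0 ∈ I; rw [mul_zero]; exact h.1
  · show a * (x + y) ∈ I; rw [mul_add]; exact h.2.1 _ hx _ hy
  · show a * (-x) ∈ I; rw [mul_neg]; exact h.2.2.1 _ hx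
  · show a * (x * b) ∈ I; rw [← mul_assoc]; exact h.2.2.2 _ hx b

lemma setIsHomogeneous_colon {I : Set A} (hI : SetIsHomogeneous 𝒜 I) {a : A} {d : ℕ}
    (ha : a ∈ 𝒜 d) : SetIsHomogeneous 𝒜 {x : A | a * x ∈ I} := by
  intro x hx m
  show a * ((DirectSum.decompose 𝒜 x m : 𝒜 m) : A) ∈ I
  rw [← DirectSum.coe_decompose_mul_add_of_left_mem 𝒜 (b := x) (j := m) ha]
  exact hI _ hx (d + m)

end Helpers

section Pow

variable {A : Type*} [Ring A] (𝒜 : ℕ → AddSubgroup A) [GradedRing 𝒜]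

lemma isRightIdealSet_setIdealMul (I : Set A) {J : Set A}
    (hJ : ∀ y ∈ J, ∀ b : A, y * b ∈ J) : IsRightIdealSet (setIdealMul I J) := by
  refine ⟨(AddSubgroup.closure _).zero_mem,
    fun x hx y hy => (AddSubgroup.closure _).add_mem hx hy,
    fun x hx => (AddSubgroup.closure _).neg_mem hx, fun x hx b => ?_⟩
  show x * b ∈ AddSubgroup.closure _
  induction hx using AddSubgroup.closure_induction with
  | mem z hz =>
    obtain ⟨u, hu, v, hv, rfl⟩ := hz
    exact AddSubgroup.subset_closure ⟨u, hu, v * b, hJ v hv b, mul_assoc _ _ _⟩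
  | zero => simpa using (AddSubgroup.closure _).zero_mem
  | add u v _ _ hu hv => simpa [add_mul] using (AddSubgroup.closure _).add_mem hu hv
  | neg u _ hu => simpa [neg_mul] using (AddSubgroup.closure _).neg_mem hu

lemma isRightIdealSet_setIdealPow (I : Set A) (n : ℕ) : IsRightIdealSet (setIdealPow I n) := by
  induction n with
  | zero => exact isRightIdealSet_univ
  | succ n ih => exact isRightIdealSet_setIdealMul I (fun y hy b => ih.2.2.2 y hy b)

lemma pow_subset_geIdeal : ∀ n : ℕ, setIdealPow (geIdeal 𝒜 1) n ⊆ geIdeal 𝒜 n := by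
  intro n
  induction n with
  | zero => rw [geIdeal_zero]; exact fun x _ => trivial
  | succ n ih =>
    refine closure_subset_of_isRightIdealSet (isRightIdealSet_geIdeal 𝒜 (n + 1)) ?_
    rintro z ⟨x, hx, y, hy, rfl⟩
    have := mul_mem_geIdeal 𝒜 hx (ih hy)
    rwa [Nat.add_comm 1 n] at this

lemma pow_succ_subset (I : Set A) : ∀ n : ℕ, setIdealPow I (n + 1) ⊆ setIdealPow I n := by
  intro n
  induction n with
  | zero => exact fun x _ => trivial
  | succ n ih =>
    refine closure_subset_of_isRightIdealSet (isRightIdealSet_setIdealPow I (n + 1)) ?_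
    rintro z ⟨x, hx, y, hy, rfl⟩
    exact AddSubgroup.subset_closure ⟨x, hx, y, ih hy, rfl⟩

lemma pow_antitone (I : Set A) {m n : ℕ} (h : m ≤ n) : setIdealPow I n ⊆ setIdealPow I m := by
  induction h with
  | refl => exact fun x hx => hx
  | step h ih => exact fun x hx => ih (pow_succ_subset I _ hx)

lemma homog_mul_pow {a : A} {d : ℕ} (ha : a ∈ 𝒜 d) {n : ℕ} :
    ∀ {x : A}, x ∈ setIdealPow (geIdeal 𝒜 1) n → a * x ∈ setIdealPow (geIdeal 𝒜 1) n := by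
  rcases Nat.eq_zero_or_pos d with hd | hd
  · subst hd
    induction n with
    | zero => exact fun _ => trivial
    | succ n ih =>
      intro x hx
      show a * x ∈ AddSubgroup.closure _
      induction hx using AddSubgroup.closure_induction with
      | mem z hz =>
        obtain ⟨u, hu, v, hv, rfl⟩ := hz
        have hau : a * u ∈ geIdeal 𝒜 1 := by
          have := mul_mem_geIdeal 𝒜 (show a ∈ geIdeal 𝒜 0 from fun m hm => absurd hm (Nat.not_lt_zero m)) hu
          simpa using this
        exact AddSubgroup.subset_closure ⟨a * u, hau, v, hv, (mul_assoc _ _ _).symm⟩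
      | zero => simpa using (AddSubgroup.closure _).zero_mem
      | add u v _ _ hu hv => simpa [mul_add] using (AddSubgroup.closure _).add_mem hu hv
      | neg u _ hu => simpa [mul_neg] using (AddSubgroup.closure _).neg_mem hu
  · intro x hx
    have : a * x ∈ setIdealPow (geIdeal 𝒜 1) (n + 1) :=
      AddSubgroup.subset_closure ⟨a, mem_geIdeal_of_mem 𝒜 ha hd, x, hx, rfl⟩
    exact pow_succ_subset _ n this

end Pow

/-- products of `n` elements of `S` (prepending). -/
def mulPowSet {A : Type*} [Ring A] (S : Set A) : ℕ → Set A
  | 0 => {1}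
  | n + 1 => {z : A | ∃ x ∈ S, ∃ p ∈ mulPowSet S n, z = x * p}

section Gens

variable {A : Type*} [Ring A]

lemma mulPowSet_finite {S : Set A} (hS : S.Finite) : ∀ n, (mulPowSet S n).Finite
  | 0 => Set.finite_singleton 1
  | n + 1 => by
    have : mulPowSet S (n + 1) = Set.image2 (· * ·) S (mulPowSet S n) := by
      ext z
      simp only [Set.mem_image2, mulPowSet, Set.mem_setOf_eq]
      constructor
      · rintro ⟨x, hx, p, hp, rfl⟩; exact ⟨x, hx, p, hp, rfl⟩
      · rintro ⟨x, hx, p, hp, rfl⟩; exact ⟨x, hx, p, hp, rfl⟩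
    rw [this]
    exact Set.Finite.image2 _ hS (mulPowSet_finite hS n)

variable (𝒜 : ℕ → AddSubgroup A) [GradedRing 𝒜]

lemma mulPowSet_homog {S : Set A} (hS : ∀ x ∈ S, ∃ d, x ∈ 𝒜 d) :
    ∀ n, ∀ p ∈ mulPowSet S n, ∃ e, p ∈ 𝒜 e
  | 0, p, hp => by
    rw [show p = 1 from hp]
    exact ⟨0, SetLike.one_mem_graded 𝒜⟩
  | n + 1, p, hp => by
    obtain ⟨x, hx, q, hq, rfl⟩ := hp
    obtain ⟨d, hd⟩ := hS x hx
    obtain ⟨e, he⟩ := mulPowSet_homog hS n q hq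
    exact ⟨d + e, SetLike.mul_mem_graded hd he⟩

lemma mulPowSet_subset_pow {S : Set A} (hS : S ⊆ geIdeal 𝒜 1) :
    ∀ n, mulPowSet S n ⊆ setIdealPow (geIdeal 𝒜 1) n
  | 0, p, hp => trivial
  | n + 1, p, hp => by
    obtain ⟨x, hx, q, hq, rfl⟩ := hp
    exact AddSubgroup.subset_closure ⟨x, hS hx, q, mulPowSet_subset_pow hS n hq, rfl⟩

/-- a finite homogeneous generating family for `A_+`, with degrees bounded by `D`. -/
lemma exists_good_gens (hfg : IsFGRightIdealSet (geIdeal 𝒜 1)) :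
    ∃ (S : Finset A) (D : ℕ) (f : A → ℕ), 0 < D ∧
      geIdeal 𝒜 1 = rightIdealSpan (S : Set A) ∧
      ∀ x ∈ S, 0 < f x ∧ f x ≤ D ∧ x ∈ 𝒜 (f x) := by
  classical
  obtain ⟨s, hs⟩ := hfg
  set S : Finset A := s.biUnion (fun x =>
    ((DirectSum.decompose 𝒜 x).support.filter (fun m => 0 < m)).image
      (fun m => ((DirectSum.decompose 𝒜 x m : 𝒜 m) : A))) with hSdef
  set D : ℕ := 1 + s.sup (fun x => (DirectSum.decompose 𝒜 x).support.sup id) with hDdef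
  have hdeg : ∀ y ∈ S, ∃ d, 0 < d ∧ d ≤ D ∧ y ∈ 𝒜 d := by
    intro y hy
    rw [hSdef, Finset.mem_biUnion] at hy
    obtain ⟨x, hx, hy⟩ := hy
    rw [Finset.mem_image] at hy
    obtain ⟨m, hm, rfl⟩ := hy
    rw [Finset.mem_filter] at hm
    refine ⟨m, hm.2, ?_, SetLike.coe_mem _⟩
    have : m ≤ s.sup (fun x => (DirectSum.decompose 𝒜 x).support.sup id) :=
      le_trans (Finset.le_sup (f := id) hm.1) (Finset.le_sup (f := fun x => (DirectSum.decompose 𝒜 x).support.sup id) hx)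
    omega
  set f : A → ℕ := fun y => if h : ∃ d, 0 < d ∧ d ≤ D ∧ y ∈ 𝒜 d then h.choose else 0 with hfdef
  refine ⟨S, D, f, by omega, ?_, ?_⟩
  · apply Set.Subset.antisymm
    · -- geIdeal 1 ⊆ span S
      rw [hs]
      refine rightIdealSpan_subset ?_ (isRightIdealSet_rightIdealSpan _)
      intro x hx
      have hx1 : x ∈ geIdeal 𝒜 1 := hs ▸ subset_rightIdealSpan _ hx
      have hdec : x = ∑ m ∈ (DirectSum.decompose 𝒜 x).support, ((DirectSum.decompose 𝒜 x m : 𝒜 m) : A) :=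
        (DirectSum.sum_support_decompose 𝒜 x).symm
      rw [hdec]
      show _ ∈ AddSubgroup.closure _
      refine AddSubgroup.sum_mem _ (fun m hm => ?_)
      rcases Nat.eq_zero_or_pos m with h0 | h0
      · subst h0
        rw [hx1 0 Nat.one_pos]
        exact (AddSubgroup.closure _).zero_mem
      · have hmem : ((DirectSum.decompose 𝒜 x m : 𝒜 m) : A) ∈ S := by
          rw [hSdef]
          simp only [Finset.mem_biUnion, Finset.mem_image, Finset.mem_filter]
          exact ⟨x, hx, m, ⟨hm, h0⟩, rfl⟩
        exact subset_rightIdealSpan _ (Finset.mem_coe.2 hmem)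
    · refine rightIdealSpan_subset ?_ (isRightIdealSet_geIdeal 𝒜 1)
      intro y hy
      obtain ⟨d, hd1, _, hd3⟩ := hdeg y hy
      exact mem_geIdeal_of_mem 𝒜 hd3 hd1
  · intro x hx
    have hex := hdeg x hx
    rw [hfdef]
    simp only [dif_pos hex]
    exact hex.choose_spec

end Gens

section Core

variable {A : Type*} [Ring A] (𝒜 : ℕ → AddSubgroup A) [GradedRing 𝒜]
variable {S : Finset A} {D : ℕ} {f : A → ℕ}

/-- extraction of homogeneous components along the generators -/
lemma extract_gen (hSgen : geIdeal 𝒜 1 = rightIdealSpan (S : Set A))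
    (hf : ∀ x ∈ S, 0 < f x ∧ f x ≤ D ∧ x ∈ 𝒜 (f x)) (C : AddSubgroup A) (m : ℕ)
    (hC : ∀ x ∈ S, ∀ r : A, f x ≤ m →
      x * ((DirectSum.decompose 𝒜 r (m - f x) : 𝒜 (m - f x)) : A) ∈ C)
    {z : A} (hz : z ∈ 𝒜 m) (hm : 1 ≤ m) : z ∈ C := by
  have hzA : z ∈ rightIdealSpan (S : Set A) := hSgen ▸ mem_geIdeal_of_mem 𝒜 hz hm
  have key : ∀ y : A, y ∈ AddSubgroup.closure {y : A | ∃ a ∈ (S : Set A), ∃ r : A, y = a * r} →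
      ((DirectSum.decompose 𝒜 y m : 𝒜 m) : A) ∈ C := by
    intro y hy
    induction hy using AddSubgroup.closure_induction with
    | mem u hu =>
      obtain ⟨a, ha, r, rfl⟩ := hu
      have ha' := hf a ha
      by_cases hle : f a ≤ m
      · rw [DirectSum.coe_decompose_mul_of_left_mem_of_le 𝒜 ha'.2.2 hle]
        exact hC a ha r hle
      · rw [DirectSum.coe_decompose_mul_of_left_mem_of_not_le 𝒜 ha'.2.2 hle]
        exact C.zero_mem
    | zero =>
      have : ((DirectSum.decompose 𝒜 (0 : A) m : 𝒜 m) : A) = 0 := by simp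
      rw [this]; exact C.zero_mem
    | add u v _ _ hu hv =>
      have : ((DirectSum.decompose 𝒜 (u + v) m : 𝒜 m) : A)
          = GradedRing.proj 𝒜 m u + GradedRing.proj 𝒜 m v := map_add (GradedRing.proj 𝒜 m) u v
      rw [this]; exact C.add_mem hu hv
    | neg u _ hu =>
      have : ((DirectSum.decompose 𝒜 (-u) m : 𝒜 m) : A) = -(GradedRing.proj 𝒜 m u) :=
        map_neg (GradedRing.proj 𝒜 m) u
      rw [this]; exact C.neg_mem hu
  have := key z hzA
  rwa [DirectSum.decompose_of_mem_same 𝒜 hz] at this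

lemma pow_of_degree_ge (hD : 0 < D) (hSgen : geIdeal 𝒜 1 = rightIdealSpan (S : Set A))
    (hf : ∀ x ∈ S, 0 < f x ∧ f x ≤ D ∧ x ∈ 𝒜 (f x)) :
    ∀ (M : ℕ) {z : A} {m : ℕ}, z ∈ 𝒜 m → M * D ≤ m → z ∈ setIdealPow (geIdeal 𝒜 1) M := by
  intro M
  induction M with
  | zero => exact fun _ _ => trivial
  | succ M ih =>
    intro z m hz hm
    rw [Nat.succ_mul] at hm
    have hm1 : 1 ≤ m := by omega
    refine extract_gen 𝒜 hSgen hf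
      (AddSubgroup.closure {z : A | ∃ x ∈ geIdeal 𝒜 1, ∃ y ∈ setIdealPow (geIdeal 𝒜 1) M, z = x * y})
      m ?_ hz hm1
    intro x hx r hle
    have hfx := hf x hx
    have hr : ((DirectSum.decompose 𝒜 r (m - f x) : 𝒜 (m - f x)) : A) ∈ setIdealPow (geIdeal 𝒜 1) M :=
      ih (SetLike.coe_mem _) (by omega)
    exact AddSubgroup.subset_closure ⟨x, mem_geIdeal_of_mem 𝒜 hfx.2.2 hfx.1, _, hr, rfl⟩

lemma mem_closure_mulPow (hD : 0 < D) (hSgen : geIdeal 𝒜 1 = rightIdealSpan (S : Set A))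
    (hf : ∀ x ∈ S, 0 < f x ∧ f x ≤ D ∧ x ∈ 𝒜 (f x)) :
    ∀ (t M : ℕ) {z : A} {m : ℕ}, z ∈ 𝒜 m → t * D + M * D ≤ m →
    z ∈ AddSubgroup.closure {u : A | ∃ p ∈ mulPowSet (S : Set A) t,
        ∃ w ∈ setIdealPow (geIdeal 𝒜 1) M, u = p * w} := by
  intro t
  induction t with
  | zero =>
    intro M z m hz hm
    refine AddSubgroup.subset_closure ⟨1, rfl, z, ?_, (one_mul z).symm⟩
    exact pow_of_degree_ge 𝒜 hD hSgen hf M hz (by omega)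
  | succ t ih =>
    intro M z m hz hm
    rw [Nat.succ_mul] at hm
    have hm1 : 1 ≤ m := by omega
    refine extract_gen 𝒜 hSgen hf _ m ?_ hz hm1
    intro x hx r hle
    have hfx := hf x hx
    have hr := ih M (z := ((DirectSum.decompose 𝒜 r (m - f x) : 𝒜 (m - f x)) : A))
      (SetLike.coe_mem _) (by omega)
    -- push left multiplication by x through the closure
    clear hz hm hle
    set u := ((DirectSum.decompose 𝒜 r (m - f x) : 𝒜 (m - f x)) : A)
    clear_value u
    induction hr using AddSubgroup.closure_induction with
    | mem v hv =>
      obtain ⟨p, hp, w, hw, rfl⟩ := hv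
      exact AddSubgroup.subset_closure ⟨x * p, ⟨x, hx, p, hp, rfl⟩, w, hw, (mul_assoc _ _ _).symm⟩
    | zero => simpa using (AddSubgroup.closure _).zero_mem
    | add u v _ _ hu hv => simpa [mul_add] using (AddSubgroup.closure _).add_mem hu hv
    | neg u _ hu => simpa [mul_neg] using (AddSubgroup.closure _).neg_mem hu

lemma geIdeal_subset_pow (hD : 0 < D) (hSgen : geIdeal 𝒜 1 = rightIdealSpan (S : Set A))
    (hf : ∀ x ∈ S, 0 < f x ∧ f x ≤ D ∧ x ∈ 𝒜 (f x)) (M : ℕ) :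
    geIdeal 𝒜 (M * D) ⊆ setIdealPow (geIdeal 𝒜 1) M := by
  classical
  intro z hz
  have hdec : z = ∑ k ∈ (DirectSum.decompose 𝒜 z).support, ((DirectSum.decompose 𝒜 z k : 𝒜 k) : A) :=
    (DirectSum.sum_support_decompose 𝒜 z).symm
  rw [hdec]
  have hP := isRightIdealSet_setIdealPow (geIdeal 𝒜 1) M
  have : ∀ k ∈ (DirectSum.decompose 𝒜 z).support,
      ((DirectSum.decompose 𝒜 z k : 𝒜 k) : A) ∈ hP.toAddSubgroup := by
    intro k _
    by_cases hk : M * D ≤ k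
    · exact pow_of_degree_ge 𝒜 hD hSgen hf M (SetLike.coe_mem _) hk
    · rw [hz k (by omega)]
      exact hP.toAddSubgroup.zero_mem
  exact hP.toAddSubgroup.sum_mem this

end Core

section Final

variable {A : Type*} [Ring A] (𝒜 : ℕ → AddSubgroup A) [GradedRing 𝒜]
variable {S : Finset A} {D : ℕ} {f : A → ℕ}

lemma saturated_pow (hD : 0 < D) (hSgen : geIdeal 𝒜 1 = rightIdealSpan (S : Set A))
    (hf : ∀ x ∈ S, 0 < f x ∧ f x ≤ D ∧ x ∈ 𝒜 (f x)) {n : ℕ} {I J : Set A}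
    (hJ : IsRightIdealSet J) (hPn : setIdealPow (geIdeal 𝒜 1) n ⊆ I)
    (hcolon : ∀ a ∈ I, IsHomogeneousElem 𝒜 a →
      ∃ M : ℕ, setIdealPow (geIdeal 𝒜 1) M ⊆ {x : A | a * x ∈ J}) :
    ∃ K : ℕ, setIdealPow (geIdeal 𝒜 1) K ⊆ J := by
  classical
  have hSsub : (S : Set A) ⊆ geIdeal 𝒜 1 := hSgen ▸ subset_rightIdealSpan _
  have hfin : (mulPowSet (S : Set A) n).Finite := mulPowSet_finite S.finite_toSet n
  have hps : ∀ p ∈ mulPowSet (S : Set A) n,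
      ∃ M : ℕ, setIdealPow (geIdeal 𝒜 1) M ⊆ {x : A | p * x ∈ J} := by
    intro p hp
    refine hcolon p (hPn (mulPowSet_subset_pow 𝒜 hSsub n hp)) ?_
    exact mulPowSet_homog 𝒜 (fun x hx => ⟨f x, (hf x hx).2.2⟩) n p hp
  set g : A → ℕ := fun p =>
    if h : ∃ M : ℕ, setIdealPow (geIdeal 𝒜 1) M ⊆ {x : A | p * x ∈ J} then h.choose else 0
    with hgdef
  set M : ℕ := hfin.toFinset.sup g with hMdef
  have hM : ∀ p ∈ mulPowSet (S : Set A) n,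
      setIdealPow (geIdeal 𝒜 1) M ⊆ {x : A | p * x ∈ J} := by
    intro p hp
    have hex := hps p hp
    have hgp : setIdealPow (geIdeal 𝒜 1) (g p) ⊆ {x : A | p * x ∈ J} := by
      rw [hgdef]; simp only [dif_pos hex]; exact hex.choose_spec
    refine fun x hx => hgp (pow_antitone _ ?_ hx)
    exact Finset.le_sup (hfin.mem_toFinset.2 hp)
  refine ⟨n * D + M * D, ?_⟩
  intro z hz
  have hz' : z ∈ geIdeal 𝒜 (n * D + M * D) := pow_subset_geIdeal 𝒜 _ hz
  have hdec : z = ∑ k ∈ (DirectSum.decompose 𝒜 z).support, ((DirectSum.decompose 𝒜 z k : 𝒜 k) : A) :=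
    (DirectSum.sum_support_decompose 𝒜 z).symm
  rw [hdec]
  have hcl : (AddSubgroup.closure {u : A | ∃ p ∈ mulPowSet (S : Set A) n,
      ∃ w ∈ setIdealPow (geIdeal 𝒜 1) M, u = p * w} : Set A) ⊆ J := by
    refine closure_subset_of_isRightIdealSet hJ ?_
    rintro u ⟨p, hp, w, hw, rfl⟩
    exact hM p hp hw
  have : ∀ k ∈ (DirectSum.decompose 𝒜 z).support,
      ((DirectSum.decompose 𝒜 z k : 𝒜 k) : A) ∈ hJ.toAddSubgroup := by
    intro k _
    by_cases hk : n * D + M * D ≤ k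
    · exact hcl (mem_closure_mulPow 𝒜 hD hSgen hf n M (SetLike.coe_mem _) hk)
    · rw [hz' k (by omega)]
      exact hJ.toAddSubgroup.zero_mem
  exact hJ.toAddSubgroup.sum_mem this

lemma IsTFilter.superset {F : Set (Set A)} (hF : IsTFilter 𝒜 F) {I J : Set A} (hI : I ∈ F)
    (hJ1 : IsRightIdealSet J) (hJ2 : SetIsHomogeneous 𝒜 J) (hIJ : I ⊆ J) : J ∈ F := by
  refine hF.saturated I hI J hJ1 hJ2 (fun a ha _ => ?_)
  have : {x : A | a * x ∈ J} = Set.univ :=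
    Set.eq_univ_of_forall (fun x => hJ1.2.2.2 a (hIJ ha) x)
  rw [this]
  exact hF.univ_mem

lemma geIdeal_mem_all {F : Set (Set A)} (hF : IsTFilter 𝒜 F) (h1 : geIdeal 𝒜 1 ∈ F) :
    ∀ n : ℕ, geIdeal 𝒜 n ∈ F := by
  intro n
  induction n with
  | zero => rw [geIdeal_zero]; exact hF.univ_mem
  | succ n ih =>
    refine hF.saturated _ ih (geIdeal 𝒜 (n + 1)) (isRightIdealSet_geIdeal 𝒜 _)
      (setIsHomogeneous_geIdeal 𝒜 _) ?_
    intro a ha hha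
    obtain ⟨d, hd⟩ := hha
    refine hF.superset 𝒜 h1 (isRightIdealSet_colon (isRightIdealSet_geIdeal 𝒜 _) a)
      (setIsHomogeneous_colon 𝒜 (setIsHomogeneous_geIdeal 𝒜 _) hd) ?_
    intro x hx
    exact mul_mem_geIdeal 𝒜 ha hx

end Final

/-- Lemmas 3.2 and 3.3. -/
theorem tFilter_powers_of_irrelevant {A : Type*} [Ring A] (𝒜 : ℕ → AddSubgroup A)
    [GradedRing 𝒜] (hfg : IsFGRightIdealSet (geIdeal 𝒜 1)) :
    IsTFilter 𝒜 {I : Set A | IsRightIdealSet I ∧ SetIsHomogeneous 𝒜 I ∧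
        ∃ n : ℕ, setIdealPow (geIdeal 𝒜 1) n ⊆ I} ∧
      ∀ F : Set (Set A), IsTFilter 𝒜 F →
        ((geIdeal 𝒜 1 ∈ F ↔ ∀ n : ℕ, geIdeal 𝒜 n ∈ F) ∧
          (geIdeal 𝒜 1 ∈ F ↔
            {I : Set A | IsRightIdealSet I ∧ SetIsHomogeneous 𝒜 I ∧
              ∃ n : ℕ, setIdealPow (geIdeal 𝒜 1) n ⊆ I} ⊆ F)) := by
  obtain ⟨S, D, f, hD, hSgen, hf⟩ := exists_good_gens 𝒜 hfg
  constructor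
  · refine ⟨fun I hI => ⟨hI.1, hI.2.1⟩,
      ⟨isRightIdealSet_univ, setIsHomogeneous_univ 𝒜, 0, Set.subset_univ _⟩, ?_, ?_⟩
    · rintro I ⟨hI1, hI2, n, hn⟩ a ⟨d, hd⟩
      exact ⟨isRightIdealSet_colon hI1 a, setIsHomogeneous_colon 𝒜 hI2 hd,
        n, fun x hx => hn (homog_mul_pow 𝒜 hd hx)⟩
    · rintro I ⟨hI1, hI2, n, hn⟩ J hJ1 hJ2 hcolon
      exact ⟨hJ1, hJ2,
        saturated_pow 𝒜 hD hSgen hf hJ1 hn (fun a ha hha => (hcolon a ha hha).2.2)⟩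
  · intro F hF
    refine ⟨⟨fun h => geIdeal_mem_all 𝒜 hF h, fun h => h 1⟩, ?_, ?_⟩
    · intro h1 I hI
      obtain ⟨hI1, hI2, n, hn⟩ := hI
      refine hF.superset 𝒜 (geIdeal_mem_all 𝒜 hF h1 (n * D)) hI1 hI2 ?_
      exact fun x hx => hn (geIdeal_subset_pow 𝒜 hD hSgen hf n hx)
    · intro hG
      exact hG ⟨isRightIdealSet_geIdeal 𝒜 1, setIsHomogeneous_geIdeal 𝒜 1, 1,
        pow_subset_geIdeal 𝒜 1⟩
end

section
/- Let C be a closed symmetric monoidal Grothendieck abelian category with a family {g_i}_{i∈I} of generators each of which is strongly dualizable. Then for each i the internal-hom functor [g_i, −] : C → C preserves filtered colimits (each g_i is enriched finitely presented, so C is enriched locally finitely presented). If moreover the monoidal unit 𝟙 is finitely presented (the functor Hom_C(𝟙, −) preserves filtered colimits), then each g_i is finitely presented, i.e. Hom_C(g_i, −) preserves filtered colimits. (Lemma 5.11 and Corollary from it.) -/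
/-!
Lemma 5.11 and its corollary: in a closed symmetric monoidal Grothendieck category
with a family of strongly dualizable generators `g i`, each internal-hom functor
`[g i, −]` preserves filtered colimits (so the category is enriched locally finitely
presented); and if the unit `𝟙` is finitely presented, then each `g i` is finitely
presented.
-/

open CategoryTheory MonoidalCategory MonoidalClosed Limits Opposite

theorem enriched_locally_finitely_presented {C : Type*} [Category C]
    [MonoidalCategory C] [SymmetricCategory C] [MonoidalClosed C]
    [Abelian C] [HasColimits C] [HasFilteredColimits C] [AB5 C]
    {I : Type*} (g : I → C) (hgen : ObjectProperty.IsSeparating (Set.range g))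
    (hdual : ∀ i, ∃ d : C, Nonempty (ExactPairing d (g i))) :
    (∀ i, PreservesFilteredColimits (ihom (g i))) ∧
      (PreservesFilteredColimits (coyoneda.obj (op (𝟙_ C))) →
        ∀ i, PreservesFilteredColimits (coyoneda.obj (op (g i)))) := by
  have key : ∀ i, PreservesFilteredColimits (ihom (g i)) := by
    intro i
    obtain ⟨d, ⟨hp⟩⟩ := hdual i
    -- `tensorLeft (g i) ⊣ tensorLeft d` and `tensorLeft (g i) ⊣ ihom (g i)`,
    -- so `ihom (g i) ≅ tensorLeft d`, which preserves colimits as a left adjoint.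
    have e : tensorLeft d ≅ ihom (g i) :=
      Adjunction.rightAdjointUniq (tensorLeftAdjunction d (g i)) (ihom.adjunction (g i))
    haveI : PreservesColimits (tensorLeft d) :=
      (ihom.adjunction d).leftAdjoint_preservesColimits
    haveI : PreservesColimits (ihom (g i)) := preservesColimits_of_natIso e
    infer_instance
  refine ⟨key, ?_⟩
  intro hunit i
  haveI := key i
    -- `Hom(g i, X) ≅ Hom(𝟙, [g i, X])` naturally in `X`.
  have e : ihom (g i) ⋙ coyoneda.obj (op (𝟙_ C)) ≅ coyoneda.obj (op (g i)) := by
    refine NatIso.ofComponents (fun X => Equiv.toIso ?_) ?_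
    · exact ((ihom.adjunction (g i)).homEquiv (𝟙_ C) X).symm.trans
        ((ρ_ (g i)).homCongr (Iso.refl X))
    · intro X Y f
      ext u
      simpa using (ihom.adjunction (g i)).homEquiv_naturality_right_symm u f
  exact ⟨fun J _ _ => preservesColimitsOfShape_of_natIso e⟩
end

section
/- Let 𝒜 be a graded algebra structure on a commutative ring A. Then every non-empty irreducible closed subset of ProjectiveSpectrum 𝒜 has a generic point (a point whose closure is the whole subset); that is, ProjectiveSpectrum 𝒜 is a quasi-sober topological space. (Lemma 7.10 in the commutative case.) -/
/-!
Lemma 7.10 (commutative case): every non-empty irreducible closed subset of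
`ProjectiveSpectrum 𝒜` has a generic point, i.e. `ProjectiveSpectrum 𝒜` is
quasi-sober.
-/

theorem projectiveSpectrum_quasiSober {R A : Type*}
    [CommRing R] [CommRing A] [Algebra R A]
    (𝒜 : ℕ → Submodule R A) [GradedAlgebra 𝒜] :
    QuasiSober (ProjectiveSpectrum 𝒜) := by
  constructor
  intro S hS hSc
  obtain ⟨x, hx⟩ := hS.1
  have hle : ProjectiveSpectrum.vanishingIdeal S ≤ x.asHomogeneousIdeal := by
    rw [← ProjectiveSpectrum.vanishingIdeal_singleton]
    exact ProjectiveSpectrum.vanishingIdeal_anti_mono (𝒜 := 𝒜) (Set.singleton_subset_iff.mpr hx)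
  have hprime : (ProjectiveSpectrum.vanishingIdeal S).toIdeal.IsPrime := by
    constructor
    · intro h
      exact x.isPrime.ne_top ((Ideal.eq_top_iff_one _).mpr
        (hle ((Ideal.eq_top_iff_one _).mp h)))
    · intro f g hfg
      have hsub : S ⊆ ProjectiveSpectrum.zeroLocus 𝒜 {f} ∪ ProjectiveSpectrum.zeroLocus 𝒜 {g} := by
        rw [← ProjectiveSpectrum.zeroLocus_singleton_mul]
        intro y hy
        simpa using (ProjectiveSpectrum.mem_vanishingIdeal S (f * g)).mp hfg y hy
      rcases isPreirreducible_iff_isClosed_union_isClosed.mp hS.2 _ _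
          (ProjectiveSpectrum.isClosed_zeroLocus 𝒜 {f})
          (ProjectiveSpectrum.isClosed_zeroLocus 𝒜 {g}) hsub with h | h
      · exact Or.inl ((ProjectiveSpectrum.mem_vanishingIdeal S f).mpr fun y hy => by
          simpa using h hy)
      · exact Or.inr ((ProjectiveSpectrum.mem_vanishingIdeal S g).mpr fun y hy => by
          simpa using h hy)
  have hirr : ¬ HomogeneousIdeal.irrelevant 𝒜 ≤ ProjectiveSpectrum.vanishingIdeal S := fun h =>
    x.not_irrelevant_le (h.trans hle)
  refine ⟨⟨ProjectiveSpectrum.vanishingIdeal S, hprime, hirr⟩, ?_⟩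
  rw [IsGenericPoint, ← ProjectiveSpectrum.zeroLocus_vanishingIdeal_eq_closure,
    ProjectiveSpectrum.vanishingIdeal_singleton]
  show ProjectiveSpectrum.zeroLocus 𝒜 (ProjectiveSpectrum.vanishingIdeal S : Set A) = S
  rw [ProjectiveSpectrum.zeroLocus_vanishingIdeal_eq_closure, hSc.closure_eq]
end

section
/- Let 𝒜 be a graded algebra structure on a commutative ring A. If the irrelevant ideal A_+ is finitely generated, then ProjectiveSpectrum 𝒜 is a spectral space: it is T0 and quasi-compact, its quasi-compact open subsets are closed under finite intersections and form a basis of the topology, and every non-empty irreducible closed subset has a generic point. (Theorem 7.12 in the commutative case, where, by Theorem 7.13, the paper's symmetric projective scheme Proj^Σ coincides with the classical Proj.) -/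
section Aux


open AlgebraicGeometry CategoryTheory DirectSum

variable {R A : Type*} [CommRing R] [CommRing A] [Algebra R A]
    (𝒜 : ℕ → Submodule R A) [GradedAlgebra 𝒜]

lemma span_posHomog_eq_irrelevant :
    Ideal.span {x : A | ∃ n : ℕ, 0 < n ∧ x ∈ 𝒜 n} =
      (HomogeneousIdeal.irrelevant 𝒜).toIdeal := by
  classical
  apply le_antisymm
  · rw [Ideal.span_le]
    rintro x ⟨n, hn, hx⟩
    show x ∈ HomogeneousIdeal.irrelevant 𝒜
    rw [HomogeneousIdeal.mem_irrelevant_iff]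
    exact DirectSum.decompose_of_mem_ne 𝒜 hx hn.ne'
  · intro a ha
    have h0 : (DirectSum.decompose 𝒜 a 0 : A) = 0 := ha
    have := DirectSum.sum_support_decompose 𝒜 a
    rw [← this]
    refine Ideal.sum_mem _ fun i hi => Ideal.subset_span ⟨i, ?_, SetLike.coe_mem _⟩
    rcases Nat.eq_zero_or_pos i with rfl | h
    · exact absurd (Subtype.ext h0) ((DFinsupp.mem_support_toFun (DirectSum.decompose 𝒜 a) 0).mp hi)
    · exact h

lemma exists_finset_homog_gens
    (hfg : (Ideal.span {x : A | ∃ n : ℕ, 0 < n ∧ x ∈ 𝒜 n}).FG) :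
    ∃ t : Finset A, (∀ f ∈ t, ∃ n : ℕ, 0 < n ∧ f ∈ 𝒜 n) ∧
      Ideal.span (t : Set A) = (HomogeneousIdeal.irrelevant 𝒜).toIdeal := by
  classical
  rw [span_posHomog_eq_irrelevant] at hfg
  obtain ⟨s, hs⟩ := hfg
  refine ⟨s.biUnion fun g => (DirectSum.decompose 𝒜 g).support.image
      fun i => ((DirectSum.decompose 𝒜 g i : 𝒜 i) : A), ?_, ?_⟩
  · intro f hf
    simp only [Finset.mem_biUnion, Finset.mem_image] at hf
    obtain ⟨g, hg, i, hi, rfl⟩ := hf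
    have hgI : g ∈ (HomogeneousIdeal.irrelevant 𝒜).toIdeal := by
      rw [← hs]; exact Ideal.subset_span hg
    have h0 : (DirectSum.decompose 𝒜 g 0 : A) = 0 := hgI
    rcases Nat.eq_zero_or_pos i with rfl | h
    · exact absurd (Subtype.ext h0) ((DFinsupp.mem_support_toFun (DirectSum.decompose 𝒜 g) 0).mp hi)
    · exact ⟨i, h, SetLike.coe_mem _⟩
  · apply le_antisymm
    · rw [Ideal.span_le]
      intro f hf
      simp only [Finset.coe_biUnion, Set.mem_iUnion, Finset.mem_coe, Finset.mem_image,
        Finset.coe_image, Set.mem_image] at hf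
      obtain ⟨g, hg, i, hi, rfl⟩ := hf
      rw [← span_posHomog_eq_irrelevant]
      have hgI : g ∈ (HomogeneousIdeal.irrelevant 𝒜).toIdeal := by
        rw [← hs]; exact Ideal.subset_span hg
      have h0 : (DirectSum.decompose 𝒜 g 0 : A) = 0 := hgI
      rcases Nat.eq_zero_or_pos i with rfl | h
      · exact absurd (Subtype.ext h0) ((DFinsupp.mem_support_toFun (DirectSum.decompose 𝒜 g) 0).mp hi)
      · exact Ideal.subset_span ⟨i, h, SetLike.coe_mem _⟩
    · rw [← hs, Ideal.span_le]
      intro g hg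
      rw [← DirectSum.sum_support_decompose 𝒜 g]
      refine Ideal.sum_mem _ fun i hi => Ideal.subset_span ?_
      simp only [Finset.coe_biUnion, Set.mem_iUnion, Finset.mem_coe, Finset.coe_image,
        Set.mem_image]
      exact ⟨g, hg, i, hi, rfl⟩

lemma isCompact_pbo {f : A} {m : ℕ} (f_deg : f ∈ 𝒜 m) (hm : 0 < m) :
    IsCompact ((ProjectiveSpectrum.basicOpen 𝒜 f : Set (ProjectiveSpectrum 𝒜))) := by
  have e := TopCat.homeoOfIso (projIsoSpecTopComponent f_deg hm)
  have h1 : CompactSpace (PrimeSpectrum (HomogeneousLocalization.Away 𝒜 f)) := inferInstance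
  have : CompactSpace ((ProjectiveSpectrum.basicOpen 𝒜 f : Set (ProjectiveSpectrum 𝒜))) :=
    (e.trans (show _ ≃ₜ PrimeSpectrum (HomogeneousLocalization.Away 𝒜 f)
      from Homeomorph.refl _)).symm.compactSpace
  exact isCompact_iff_compactSpace.mpr this

lemma cover_pbo {t : Finset A}
    (ht : Ideal.span (t : Set A) = (HomogeneousIdeal.irrelevant 𝒜).toIdeal)
    (x : ProjectiveSpectrum 𝒜) :
    ∃ f ∈ t, x ∈ (ProjectiveSpectrum.basicOpen 𝒜 f : Set (ProjectiveSpectrum 𝒜)) := by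
  by_contra h
  push_neg at h
  refine x.not_irrelevant_le fun z hz => ?_
  have hle : Ideal.span (t : Set A) ≤ x.asHomogeneousIdeal.toIdeal := by
    rw [Ideal.span_le]
    intro f hf
    have := h f hf
    rw [ProjectiveSpectrum.mem_coe_basicOpen] at this
    exact not_not.mp this
  rw [ht] at hle
  exact hle hz

lemma pbo_basis_step {f : A} {m : ℕ} (f_deg : f ∈ 𝒜 m) (hm : 0 < m)
    (x : ProjectiveSpectrum 𝒜) (U : Set (ProjectiveSpectrum 𝒜)) (hxU : x ∈ U)
    (hU : IsOpen U) (hxf : x ∈ (ProjectiveSpectrum.basicOpen 𝒜 f : Set (ProjectiveSpectrum 𝒜))) :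
    ∃ V : Set (ProjectiveSpectrum 𝒜), (IsOpen V ∧ IsCompact V) ∧ x ∈ V ∧ V ⊆ U := by
  haveI := (inferInstance : CompactSpace (PrimeSpectrum (HomogeneousLocalization.Away 𝒜 f)))
  let e : ((ProjectiveSpectrum.basicOpen 𝒜 f : Set (ProjectiveSpectrum 𝒜))) ≃ₜ
      PrimeSpectrum (HomogeneousLocalization.Away 𝒜 f) :=
    (TopCat.homeoOfIso (projIsoSpecTopComponent f_deg hm)).trans (Homeomorph.refl _)
  set x' : ((ProjectiveSpectrum.basicOpen 𝒜 f : Set (ProjectiveSpectrum 𝒜))) := ⟨x, hxf⟩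
  have hU' : IsOpen (Subtype.val ⁻¹' U :
      Set ((ProjectiveSpectrum.basicOpen 𝒜 f : Set (ProjectiveSpectrum 𝒜)))) :=
    hU.preimage continuous_subtype_val
  have hUi : IsOpen (e.symm ⁻¹' (Subtype.val ⁻¹' U)) := hU'.preimage e.symm.continuous
  have hxe : e x' ∈ e.symm ⁻¹' (Subtype.val ⁻¹' U) := by
    simp only [Set.mem_preimage, Homeomorph.symm_apply_apply]
    exact hxU
  obtain ⟨W, ⟨r, rfl⟩, hxW, hWU⟩ :=
    PrimeSpectrum.isTopologicalBasis_basic_opens.exists_subset_of_mem_open hxe hUi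
  refine ⟨Subtype.val '' (e ⁻¹' (PrimeSpectrum.basicOpen r : Set _)), ⟨?_, ?_⟩, ?_, ?_⟩
  · exact (ProjectiveSpectrum.isOpen_basicOpen 𝒜).isOpenMap_subtype_val _
      ((PrimeSpectrum.isOpen_basicOpen).preimage e.continuous)
  · exact ((e.isCompact_preimage).mpr (PrimeSpectrum.isCompact_basicOpen r)).image
      continuous_subtype_val
  · exact ⟨x', hxW, rfl⟩
  · rintro _ ⟨y, hy, rfl⟩
    have := hWU hy
    simpa using this


end Aux

open AlgebraicGeometry CategoryTheory DirectSum



/-!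
Theorem 7.12 (commutative case): if the irrelevant ideal `A_+` (the ideal
generated by the homogeneous elements of positive degree) is finitely generated,
then `ProjectiveSpectrum 𝒜` is a spectral space: it is T0 and quasi-compact, its
quasi-compact open subsets are closed under finite intersections and form an open
basis, and every non-empty irreducible closed subset has a generic point
(quasi-sobriety).
-/

theorem projectiveSpectrum_spectralSpace {R A : Type*}
    [CommRing R] [CommRing A] [Algebra R A]
    (𝒜 : ℕ → Submodule R A) [GradedAlgebra 𝒜]
    (hfg : (Ideal.span {x : A | ∃ n : ℕ, 0 < n ∧ x ∈ 𝒜 n}).FG) :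
    T0Space (ProjectiveSpectrum 𝒜) ∧
    CompactSpace (ProjectiveSpectrum 𝒜) ∧
    (∀ U V : Set (ProjectiveSpectrum 𝒜),
      IsOpen U → IsCompact U → IsOpen V → IsCompact V → IsCompact (U ∩ V)) ∧
    TopologicalSpace.IsTopologicalBasis
      {U : Set (ProjectiveSpectrum 𝒜) | IsOpen U ∧ IsCompact U} ∧
    QuasiSober (ProjectiveSpectrum 𝒜) := by
  classical
  obtain ⟨t, ht_homog, ht_span⟩ := exists_finset_homog_gens 𝒜 hfg
  have hT0 : T0Space (ProjectiveSpectrum 𝒜) := (inferInstance : T0Space (Proj 𝒜))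
  have hsober : QuasiSober (ProjectiveSpectrum 𝒜) := (inferInstance : QuasiSober (Proj 𝒜))
  have hqs : QuasiSeparatedSpace (ProjectiveSpectrum 𝒜) := by
    have h1 : QuasiSeparatedSpace (⊤_ AlgebraicGeometry.Scheme) := inferInstance
    exact (quasiSeparatedSpace_of_quasiSeparated (Limits.terminal.from (Proj 𝒜)) :
      QuasiSeparatedSpace (Proj 𝒜))
  have hcompact : CompactSpace (ProjectiveSpectrum 𝒜) := by
    constructor
    have huniv : (Set.univ : Set (ProjectiveSpectrum 𝒜)) =
        ⋃ f ∈ t, (ProjectiveSpectrum.basicOpen 𝒜 f : Set (ProjectiveSpectrum 𝒜)) := by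
      ext x
      simp only [Set.mem_univ, true_iff, Set.mem_iUnion]
      obtain ⟨f, hf, hx⟩ := cover_pbo 𝒜 ht_span x
      exact ⟨f, hf, hx⟩
    rw [huniv]
    exact t.finite_toSet.isCompact_biUnion fun f hf => by
      obtain ⟨m, hm, hfm⟩ := ht_homog f hf
      exact isCompact_pbo 𝒜 hfm hm
  refine ⟨hT0, hcompact, fun U V hU hUc hV hVc =>
    QuasiSeparatedSpace.inter_isCompact U V hU hUc hV hVc, ?_, hsober⟩
  refine TopologicalSpace.isTopologicalBasis_of_isOpen_of_nhds (fun u hu => hu.1) ?_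
  intro x U hxU hU
  obtain ⟨f, hf, hxf⟩ := cover_pbo 𝒜 ht_span x
  obtain ⟨m, hm, f_deg⟩ := ht_homog f hf
  obtain ⟨V, hV, hxV, hVU⟩ := pbo_basis_step 𝒜 f_deg hm x U hxU hU hxf
  exact ⟨V, hV, hxV, hVU⟩
end
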